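/- arXiv:1212.3314 — 5 statements merged into one kernel-verified Lean document; each statement's English description precedes it below -/
import Mathlib

section
/- Let Λ : ℝ^N × ℝ^N × ℝ → ℝ be continuously differentiable, and for each λ ∈ ℝ let F_λ = (X(·,·,λ), P(·,·,λ)) : ℝ^N × ℝ^N → ℝ^N × ℝ^N be a map, continuously differentiable in all variables including λ, satisfying the generating relations p = ∂Λ/∂x(x, X(x,p,λ); λ) and P(x,p,λ) = −∂Λ/∂y(x, X(x,p,λ); λ) for all (x,p,λ). Assume the maps commute pairwise: F_λ ∘ F_μ = F_μ ∘ F_λ for all λ, μ, and that there is a function ℓ : ℝ × ℝ → ℝ such that for all (x,p) and all λ, μ: Λ(x, x̃; λ) + Λ(x̃, ŷ; μ) − Λ(x, x̂; μ) − Λ(x̂, ŷ; λ) = ℓ(λ, μ), where x̃ = X(x,p,λ), x̂ = X(x,p,μ), and ŷ is the x-component of F_μ(F_λ(x,p)). Assume moreover ℓ(λ,μ) = −ℓ(μ,λ) for all λ, μ. Then ℓ(λ,μ) = 0 for all λ, μ if and only if the spectrality property holds: for all λ, μ and all (x,p), ∂Λ/∂λ(x̂, ŷ; λ) = ∂Λ/∂λ(x,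 x̃; λ), i.e., ∂Λ/∂λ(x, x̃; λ) is an integral of motion of every map F_μ. -/
noncomputable section

/-- Gradient of `Λ(x,y)` in the first argument. -/
def gradA {N : ℕ} (Λ : (Fin N → ℝ) → (Fin N → ℝ) → ℝ) (a b : Fin N → ℝ) : Fin N → ℝ :=
  fun j => fderiv ℝ (fun a' => Λ a' b) a (Pi.single j 1)

/-- Gradient of `Λ(x,y)` in the second argument. -/
def gradB {N : ℕ} (Λ : (Fin N → ℝ) → (Fin N → ℝ) → ℝ) (a b : Fin N → ℝ) : Fin N → ℝ :=
  fun j => fderiv ℝ (fun b' => Λ a b') b (Pi.single j 1)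

/-- Derivative of `Λ(x, y; λ)` in the parameter `λ`. -/
def dParam {N : ℕ} (Λ : (Fin N → ℝ) → (Fin N → ℝ) → ℝ → ℝ)
    (a b : Fin N → ℝ) (l : ℝ) : ℝ :=
  deriv (fun s => Λ a b s) l

lemma clm_pi_expand {N : ℕ} (L : (Fin N → ℝ) →L[ℝ] ℝ) (u : Fin N → ℝ) :
    L u = ∑ j, u j * L (Pi.single j 1) := by
  have h := L.toLinearMap.pi_apply_eq_sum_univ u
  simp only [ContinuousLinearMap.coe_coe, smul_eq_mul] at h
  rw [h]
  refine Finset.sum_congr rfl fun j _ => ?_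
  congr 1
  congr 1
  ext k
  simp [Pi.single_apply, eq_comm]

lemma clm_expand {N : ℕ} (L : ((Fin N → ℝ) × (Fin N → ℝ)) × ℝ →L[ℝ] ℝ)
    (u v : Fin N → ℝ) (s : ℝ) :
    L ((u, v), s) = (∑ j, u j * L ((Pi.single j 1, 0), 0))
      + (∑ j, v j * L ((0, Pi.single j 1), 0)) + s * L ((0, 0), 1) := by
  have hdec : ((u, v), s) = (((u, 0), 0) : ((Fin N → ℝ) × (Fin N → ℝ)) × ℝ)
      + ((0, v), 0) + ((0, 0), s) := by
    simp [Prod.ext_iff]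
  rw [hdec, map_add, map_add]
  have e1 : L ((u, 0), 0) = ∑ j, u j * L ((Pi.single j 1, 0), 0) := by
    have := clm_pi_expand (L.comp ((ContinuousLinearMap.inl ℝ _ ℝ).comp
      (ContinuousLinearMap.inl ℝ (Fin N → ℝ) (Fin N → ℝ)))) u
    simpa using this
  have e2 : L ((0, v), 0) = ∑ j, v j * L ((0, Pi.single j 1), 0) := by
    have := clm_pi_expand (L.comp ((ContinuousLinearMap.inl ℝ _ ℝ).comp
      (ContinuousLinearMap.inr ℝ (Fin N → ℝ) (Fin N → ℝ)))) v
    simpa using this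
  have e3 : L ((0, 0), s) = s * L ((0, 0), 1) := by
    have : (((0, 0), s) : ((Fin N → ℝ) × (Fin N → ℝ)) × ℝ) = s • ((0, 0), 1) := by
      simp [Prod.ext_iff]
    rw [this, map_smul]; rfl
  rw [e1, e2, e3]

section

variable {N : ℕ} {Λ : (Fin N → ℝ) → (Fin N → ℝ) → ℝ → ℝ}
  {L : ((Fin N → ℝ) × (Fin N → ℝ)) × ℝ →L[ℝ] ℝ} {a b : Fin N → ℝ} {l : ℝ}

lemma gradA_eq (hd : HasFDerivAt (fun q : ((Fin N → ℝ) × (Fin N → ℝ)) × ℝ => Λ q.1.1 q.1.2 q.2)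
    L ((a, b), l)) (j : Fin N) :
    gradA (fun a b => Λ a b l) a b j = L ((Pi.single j 1, 0), 0) := by
  have hin : HasFDerivAt (fun a' : Fin N → ℝ => ((a', b), l))
      (((ContinuousLinearMap.id ℝ (Fin N → ℝ)).prod 0).prod 0) a :=
    (HasFDerivAt.prodMk (HasFDerivAt.prodMk (hasFDerivAt_id a) (hasFDerivAt_const b a)) (hasFDerivAt_const l a))
  have hc : HasFDerivAt (fun a' => Λ a' b l)
      (L.comp (((ContinuousLinearMap.id ℝ (Fin N → ℝ)).prod 0).prod 0)) a := HasFDerivAt.comp (g := fun q : ((Fin N → ℝ) × (Fin N → ℝ)) × ℝ => Λ q.1.1 q.1.2 q.2) a hd hin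
  have : gradA (fun a b => Λ a b l) a b j
      = (L.comp (((ContinuousLinearMap.id ℝ (Fin N → ℝ)).prod 0).prod 0)) (Pi.single j 1) := by
    simp only [gradA]
    rw [hc.fderiv]
  rw [this]
  simp

lemma gradB_eq (hd : HasFDerivAt (fun q : ((Fin N → ℝ) × (Fin N → ℝ)) × ℝ => Λ q.1.1 q.1.2 q.2)
    L ((a, b), l)) (j : Fin N) :
    gradB (fun a b => Λ a b l) a b j = L ((0, Pi.single j 1), 0) := by
  have hin : HasFDerivAt (fun b' : Fin N → ℝ => ((a, b'), l))
      (((0 : (Fin N → ℝ) →L[ℝ] (Fin N → ℝ)).prod (ContinuousLinearMap.id ℝ (Fin N → ℝ))).prod 0) b :=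
    (HasFDerivAt.prodMk (HasFDerivAt.prodMk (hasFDerivAt_const a b) (hasFDerivAt_id b)) (hasFDerivAt_const l b))
  have hc : HasFDerivAt (fun b' => Λ a b' l)
      (L.comp (((0 : (Fin N → ℝ) →L[ℝ] (Fin N → ℝ)).prod
        (ContinuousLinearMap.id ℝ (Fin N → ℝ))).prod 0)) b := HasFDerivAt.comp (g := fun q : ((Fin N → ℝ) × (Fin N → ℝ)) × ℝ => Λ q.1.1 q.1.2 q.2) b hd hin
  have : gradB (fun a b => Λ a b l) a b j
      = (L.comp (((0 : (Fin N → ℝ) →L[ℝ] (Fin N → ℝ)).prod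
          (ContinuousLinearMap.id ℝ (Fin N → ℝ))).prod 0)) (Pi.single j 1) := by
    simp only [gradB]
    rw [hc.fderiv]
  rw [this]
  simp

lemma dParam_eq (hd : HasFDerivAt (fun q : ((Fin N → ℝ) × (Fin N → ℝ)) × ℝ => Λ q.1.1 q.1.2 q.2)
    L ((a, b), l)) :
    dParam Λ a b l = L ((0, 0), 1) := by
  have hin : HasDerivAt (fun s : ℝ => (((a, b), s) : ((Fin N → ℝ) × (Fin N → ℝ)) × ℝ))
      ((0, 0), 1) l :=
    (HasDerivAt.prodMk (hasDerivAt_const l (a, b)) (hasDerivAt_id l))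
  have hc : HasDerivAt (fun s => Λ a b s) (L ((0, 0), 1)) l := hd.comp_hasDerivAt l hin
  exact hc.deriv

lemma hasDerivAt_comp3
    (hΛ : ContDiff ℝ 1 (fun q : ((Fin N → ℝ) × (Fin N → ℝ)) × ℝ => Λ q.1.1 q.1.2 q.2))
    {A B : ℝ → (Fin N → ℝ)} {C : ℝ → ℝ} {a' b' : Fin N → ℝ} {c' : ℝ}
    (hA : HasDerivAt A a' l) (hB : HasDerivAt B b' l) (hC : HasDerivAt C c' l) :
    HasDerivAt (fun t => Λ (A t) (B t) (C t))
      ((∑ j, a' j * gradA (fun a b => Λ a b (C l)) (A l) (B l) j)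
        + (∑ j, b' j * gradB (fun a b => Λ a b (C l)) (A l) (B l) j)
        + c' * dParam Λ (A l) (B l) (C l)) l := by
  set L := fderiv ℝ (fun q : ((Fin N → ℝ) × (Fin N → ℝ)) × ℝ => Λ q.1.1 q.1.2 q.2)
    ((A l, B l), C l) with hL
  have hd : HasFDerivAt (fun q : ((Fin N → ℝ) × (Fin N → ℝ)) × ℝ => Λ q.1.1 q.1.2 q.2)
      L ((A l, B l), C l) :=
    (hΛ.differentiable one_ne_zero _).hasFDerivAt
  have hin : HasDerivAt (fun t => (((A t, B t), C t) : ((Fin N → ℝ) × (Fin N → ℝ)) × ℝ))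
      ((a', b'), c') l := HasDerivAt.prodMk (HasDerivAt.prodMk hA hB) hC
  have hc : HasDerivAt (fun t => Λ (A t) (B t) (C t)) (L ((a', b'), c')) l :=
    HasFDerivAt.comp_hasDerivAt (l := fun q : ((Fin N → ℝ) × (Fin N → ℝ)) × ℝ => Λ q.1.1 q.1.2 q.2) l hd hin
  have hval : (∑ j, a' j * gradA (fun a b => Λ a b (C l)) (A l) (B l) j)
        + (∑ j, b' j * gradB (fun a b => Λ a b (C l)) (A l) (B l) j)
        + c' * dParam Λ (A l) (B l) (C l) = L ((a', b'), c') := by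
    simp_rw [gradA_eq hd, gradB_eq hd, dParam_eq hd]
    exact (clm_expand L a' b' c').symm
  rw [hval]
  exact hc

end

/-- For a family of Bäcklund transformations `F_λ` generated by
`Λ(x, y; λ)`, the discrete 1-form is closed on solutions (`ℓ(λ,μ) = 0`) if and only if the
spectrality property holds: `∂Λ/∂λ(x, x̃; λ)` is a common integral of motion of all `F_μ`. -/
theorem spectrality {N : ℕ}
    (Λ : (Fin N → ℝ) → (Fin N → ℝ) → ℝ → ℝ)
    (hΛ : ContDiff ℝ 1
      (fun q : ((Fin N → ℝ) × (Fin N → ℝ)) × ℝ => Λ q.1.1 q.1.2 q.2))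
    (F : ℝ → (Fin N → ℝ) × (Fin N → ℝ) → (Fin N → ℝ) × (Fin N → ℝ))
    (hF : ContDiff ℝ 1 (fun q : ℝ × ((Fin N → ℝ) × (Fin N → ℝ)) => F q.1 q.2))
    (hgen1 : ∀ (l : ℝ) (z : (Fin N → ℝ) × (Fin N → ℝ)),
      z.2 = gradA (fun a b => Λ a b l) z.1 (F l z).1)
    (hgen2 : ∀ (l : ℝ) (z : (Fin N → ℝ) × (Fin N → ℝ)),
      (F l z).2 = -gradB (fun a b => Λ a b l) z.1 (F l z).1)
    (hcomm : ∀ l μ : ℝ, F l ∘ F μ = F μ ∘ F l)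
    (ℓ : ℝ → ℝ → ℝ)
    (hℓ : ∀ (z : (Fin N → ℝ) × (Fin N → ℝ)) (l μ : ℝ),
      Λ z.1 (F l z).1 l + Λ (F l z).1 (F μ (F l z)).1 μ
        - Λ z.1 (F μ z).1 μ - Λ (F μ z).1 (F μ (F l z)).1 l = ℓ l μ)
    (hskew : ∀ l μ : ℝ, ℓ l μ = -ℓ μ l) :
    (∀ l μ : ℝ, ℓ l μ = 0) ↔
    (∀ (l μ : ℝ) (z : (Fin N → ℝ) × (Fin N → ℝ)),
      dParam Λ (F μ z).1 (F μ (F l z)).1 l = dParam Λ z.1 (F l z).1 l) := by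
  -- differentiability facts
  have hFz : ∀ z : (Fin N → ℝ) × (Fin N → ℝ), Differentiable ℝ (fun t : ℝ => F t z) := by
    intro z t
    exact DifferentiableAt.comp (g := fun q : ℝ × ((Fin N → ℝ) × (Fin N → ℝ)) => F q.1 q.2) (f := fun t : ℝ => (t, z)) t ((hF.differentiable one_ne_zero) (t, z))
      (DifferentiableAt.prodMk (differentiableAt_id) (differentiableAt_const z))
  have hFl : ∀ μ : ℝ, Differentiable ℝ (F μ) := by
    intro μ z
    exact DifferentiableAt.comp (g := fun q : ℝ × ((Fin N → ℝ) × (Fin N → ℝ)) => F q.1 q.2) (f := fun z => (μ, z)) z ((hF.differentiable one_ne_zero) (μ, z))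
      (DifferentiableAt.prodMk (differentiableAt_const μ) differentiableAt_id)
  -- the key derivative computation
  have key : ∀ (μ : ℝ) (z : (Fin N → ℝ) × (Fin N → ℝ)) (l : ℝ),
      HasDerivAt (fun t => ℓ t μ)
        (dParam Λ z.1 (F l z).1 l - dParam Λ (F μ z).1 (F μ (F l z)).1 l) l := by
    intro μ z l
    set g := deriv (fun t : ℝ => F t z) l with hg
    have hG : HasDerivAt (fun t : ℝ => F t z) g l := (hFz z l).hasDerivAt
    have hG1 : HasDerivAt (fun t : ℝ => (F t z).1) g.1 l :=
      HasFDerivAt.comp_hasDerivAt (l := Prod.fst) (l' := ContinuousLinearMap.fst ℝ (Fin N → ℝ) (Fin N → ℝ)) l (hasFDerivAt_fst (p := F l z)) hG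
    set w := (fderiv ℝ (F μ) (F l z)) g with hw
    have hH : HasDerivAt (fun t : ℝ => F μ (F t z)) w l :=
      ((hFl μ (F l z)).hasFDerivAt).comp_hasDerivAt l hG
    have hH1 : HasDerivAt (fun t : ℝ => (F μ (F t z)).1) w.1 l :=
      HasFDerivAt.comp_hasDerivAt (l := Prod.fst) (l' := ContinuousLinearMap.fst ℝ (Fin N → ℝ) (Fin N → ℝ)) l (hasFDerivAt_fst (p := F μ (F l z))) hH
    have T1 := hasDerivAt_comp3 hΛ (hasDerivAt_const l z.1) hG1 (hasDerivAt_id l)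
    have T2 := hasDerivAt_comp3 hΛ hG1 hH1 (hasDerivAt_const l μ)
    have T3 : HasDerivAt (fun _ : ℝ => Λ z.1 (F μ z).1 μ) 0 l := hasDerivAt_const l _
    have T4 := hasDerivAt_comp3 hΛ (hasDerivAt_const l (F μ z).1) hH1 (hasDerivAt_id l)
    have comb := ((T1.add T2).sub T3).sub T4
    simp only [id_eq] at comb
    -- rewrite the function to ℓ
    have hfun : (fun t => Λ z.1 (F t z).1 t + Λ (F t z).1 (F μ (F t z)).1 μ
        - Λ z.1 (F μ z).1 μ - Λ (F μ z).1 (F μ (F t z)).1 t) = fun t => ℓ t μ :=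
      funext fun t => hℓ z t μ
    replace comb := comb.congr_of_eventuallyEq (Filter.Eventually.of_forall fun t => (hℓ z t μ).symm)
    -- simplify the value using the generating relations
    have e1 : ∀ j, gradB (fun a b => Λ a b l) z.1 (F l z).1 j = -(F l z).2 j := by
      intro j; rw [hgen2 l z]; simp
    have e2 : ∀ j, gradA (fun a b => Λ a b μ) (F l z).1 (F μ (F l z)).1 j = (F l z).2 j := by
      intro j; rw [hgen1 μ (F l z)]
    have hcz : F l (F μ z) = F μ (F l z) := congrFun (hcomm l μ) z
    have e3 : ∀ j, gradB (fun a b => Λ a b μ) (F l z).1 (F μ (F l z)).1 j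
        = -(F μ (F l z)).2 j := by
      intro j; rw [hgen2 μ (F l z)]; simp
    have e4 : ∀ j, gradB (fun a b => Λ a b l) (F μ z).1 (F μ (F l z)).1 j
        = -(F μ (F l z)).2 j := by
      intro j
      have h2 := hgen2 l (F μ z)
      rw [hcz] at h2
      rw [h2]; simp
    have hval : (∑ j, (0 : Fin N → ℝ) j * gradA (fun a b => Λ a b l) z.1 (F l z).1 j)
          + (∑ j, g.1 j * gradB (fun a b => Λ a b l) z.1 (F l z).1 j)
          + 1 * dParam Λ z.1 (F l z).1 l
        + ((∑ j, g.1 j * gradA (fun a b => Λ a b μ) (F l z).1 (F μ (F l z)).1 j)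
          + (∑ j, w.1 j * gradB (fun a b => Λ a b μ) (F l z).1 (F μ (F l z)).1 j)
          + 0 * dParam Λ (F l z).1 (F μ (F l z)).1 μ)
        - 0
        - ((∑ j, (0 : Fin N → ℝ) j * gradA (fun a b => Λ a b l) (F μ z).1 (F μ (F l z)).1 j)
          + (∑ j, w.1 j * gradB (fun a b => Λ a b l) (F μ z).1 (F μ (F l z)).1 j)
          + 1 * dParam Λ (F μ z).1 (F μ (F l z)).1 l)
        = dParam Λ z.1 (F l z).1 l - dParam Λ (F μ z).1 (F μ (F l z)).1 l := by
      simp_rw [e1, e2, e3, e4, Pi.zero_apply, zero_mul, Finset.sum_const_zero, mul_neg,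
        Finset.sum_neg_distrib]
      ring
    rw [hval] at comb
    exact comb
  constructor
  · -- closedness implies spectrality
    intro h0 l μ z
    have hconst : (fun t => ℓ t μ) = fun _ => (0 : ℝ) := funext fun t => h0 t μ
    have hk := key μ z l
    rw [hconst] at hk
    have := hk.unique (hasDerivAt_const l 0)
    linarith [this]
  · -- spectrality implies closedness
    intro hs l μ
    have hzero : ∀ l' : ℝ, HasDerivAt (fun t => ℓ t μ) 0 l' := by
      intro l'
      have hk := key μ (0, 0) l'
      rw [hs l' μ (0, 0)] at hk
      simpa using hk
    have hdiff : Differentiable ℝ (fun t => ℓ t μ) := fun t => (hzero t).differentiableAt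
    have hderiv : ∀ t, deriv (fun t => ℓ t μ) t = 0 := fun t => (hzero t).deriv
    have heq : ℓ l μ = ℓ μ μ := is_const_of_deriv_eq_zero hdiff hderiv l μ
    have : ℓ μ μ = 0 := by linarith [hskew μ μ]
    rw [heq, this]
end
end

section
/- Let N ≥ 1, λ, μ ∈ ℝ, and let x, x̃, x̂, ŷ : ℤ/Nℤ → ℝ be sequences such that λ e^{x̂_k} − μ e^{x̃_k} ≠ 0 for all k and the superposition formula holds for all k ∈ ℤ/Nℤ: e^{ŷ_k − x̃_k − x̂_k + x_{k+1}} = (λ e^{x̂_{k+1}} − μ e^{x̃_{k+1}}) / (λ e^{x̂_k} − μ e^{x̃_k}). Then Σ_{k=1}^N (ŷ_k − x̃_k − x̂_k + x_k) = 0, equivalently ∏_{k=1}^N e^{ŷ_k − x̃_k − x̂_k + x_k} = 1. -/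
/-- If the superposition formula of the Toda Bäcklund transformations
holds at every site of the periodic lattice, then `Σ_k (x̂̃_k − x̃_k − x̂_k + x_k) = 0`,
equivalently `∏_k e^{x̂̃_k − x̃_k − x̂_k + x_k} = 1`. Here `xt = x̃`, `xh = x̂`, `yh = x̂̃`. -/
theorem toda_one_form_closed (N : ℕ) [NeZero N] (hN : 1 ≤ N) (lam mu : ℝ)
    (x xt xh yh : ZMod N → ℝ)
    (hden : ∀ k : ZMod N, lam * Real.exp (xh k) - mu * Real.exp (xt k) ≠ 0)
    (hsup : ∀ k : ZMod N,
      Real.exp (yh k - xt k - xh k + x (k + 1)) =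
        (lam * Real.exp (xh (k + 1)) - mu * Real.exp (xt (k + 1))) /
          (lam * Real.exp (xh k) - mu * Real.exp (xt k))) :
    (∑ k, (yh k - xt k - xh k + x k)) = 0 ∧
    (∏ k, Real.exp (yh k - xt k - xh k + x k)) = 1 := by
  set f : ZMod N → ℝ := fun k => lam * Real.exp (xh k) - mu * Real.exp (xt k) with hf
  have hshift : ∀ g : ZMod N → ℝ, (∑ k, g (k + 1)) = ∑ k, g k := by
    intro g
    exact Fintype.sum_equiv (Equiv.addRight (1 : ZMod N)) _ _ (fun k => rfl)
  have hS : (∑ k, (yh k - xt k - xh k + x (k + 1))) = 0 := by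
    have hexp : Real.exp (∑ k, (yh k - xt k - xh k + x (k + 1))) = 1 := by
      rw [Real.exp_sum]
      have : (∏ k, Real.exp (yh k - xt k - xh k + x (k + 1))) =
          (∏ k, f (k + 1)) / ∏ k, f k := by
        rw [← Finset.prod_div_distrib]
        exact Finset.prod_congr rfl (fun k _ => hsup k)
      rw [this]
      have : (∏ k : ZMod N, f (k + 1)) = ∏ k, f k :=
        Fintype.prod_equiv (Equiv.addRight (1 : ZMod N)) _ _ (fun k => rfl)
      rw [this, div_self (Finset.prod_ne_zero_iff.2 (fun k _ => hden k))]
    rw [← Real.exp_zero] at hexp; exact Real.exp_injective hexp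
  have hsum : (∑ k, (yh k - xt k - xh k + x k)) = 0 := by
    have h1 : (∑ k, (yh k - xt k - xh k + x (k + 1))) =
        (∑ k, (yh k - xt k - xh k)) + ∑ k, x (k + 1) := by
      rw [← Finset.sum_add_distrib]
    have h2 : (∑ k, (yh k - xt k - xh k + x k)) =
        (∑ k, (yh k - xt k - xh k)) + ∑ k, x k := by
      rw [← Finset.sum_add_distrib]
    rw [h2, ← hshift x, ← h1, hS]
  refine ⟨hsum, ?_⟩
  rw [← Real.exp_sum, hsum, Real.exp_zero]
end

section
/- Let N ≥ 1 and λ, μ ∈ ℝ \ {0}. For sequences u, v : ℤ/Nℤ → ℝ define Λ(u, v; λ) = (1/λ) Σ_{k=1}^N (e^{v_k − u_k} − 1 − (v_k − u_k)) − λ Σ_{k=1}^N e^{u_{k+1} − v_k}. Let x, x̃, x̂, ŷ : ℤ/Nℤ → ℝ be sequences satisfying, for all k ∈ ℤ/Nℤ, the two superposition identities (1/λ) e^{x̃_{k+1} − x_{k+1}} − (1/μ) e^{x̂_{k+1} − x_{k+1}} − (1/λ) e^{ŷ_k − x̂_k} + (1/μ) e^{ŷ_k − x̃_k} = 0 and λ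 e^{x_{k+1} − x̃_k} − μ e^{x_{k+1} − x̂_k} − λ e^{x̂_{k+1} − ŷ_k} + μ e^{x̃_{k+1} − ŷ_k} = 0. Then Λ(x, x̃; λ) + Λ(x̃, ŷ; μ) − Λ(x, x̂; μ) − Λ(x̂, ŷ; λ) = (1/λ − 1/μ) Σ_{k=1}^N (ŷ_k − x̃_k − x̂_k + x_k). -/
noncomputable section

/-- The Lagrangian of the Toda Bäcklund transformation with parameter `λ`:
`Λ(u,v;λ) = (1/λ) Σ_k (e^{v_k−u_k} − 1 − (v_k−u_k)) − λ Σ_k e^{u_{k+1}−v_k}`. -/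
def todaLagr {N : ℕ} [NeZero N] (lam : ℝ) (u v : ZMod N → ℝ) : ℝ :=
  (1 / lam) * ∑ k, (Real.exp (v k - u k) - 1 - (v k - u k)) -
    lam * ∑ k, Real.exp (u (k + 1) - v k)

/-- Under the two superposition identities of the Toda Bäcklund
transformations, the exterior derivative of the discrete Lagrangian 1-form on an elementary
square equals `(1/λ − 1/μ) Σ_k (x̂̃_k − x̃_k − x̂_k + x_k)`.
Here `xt = x̃`, `xh = x̂`, `yh = x̂̃`. -/
theorem toda_square_value (N : ℕ) [NeZero N] (hN : 1 ≤ N)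
    (lam mu : ℝ) (hlam : lam ≠ 0) (hmu : mu ≠ 0)
    (x xt xh yh : ZMod N → ℝ)
    (hsup1 : ∀ k : ZMod N,
      (1 / lam) * Real.exp (xt (k + 1) - x (k + 1)) -
        (1 / mu) * Real.exp (xh (k + 1) - x (k + 1)) -
        (1 / lam) * Real.exp (yh k - xh k) +
        (1 / mu) * Real.exp (yh k - xt k) = 0)
    (hsup2 : ∀ k : ZMod N,
      lam * Real.exp (x (k + 1) - xt k) - mu * Real.exp (x (k + 1) - xh k) -
        lam * Real.exp (xh (k + 1) - yh k) + mu * Real.exp (xt (k + 1) - yh k) = 0) :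
    todaLagr lam x xt + todaLagr mu xt yh - todaLagr mu x xh - todaLagr lam xh yh =
      (1 / lam - 1 / mu) * ∑ k, (yh k - xt k - xh k + x k) := by
  classical
  have S1 : (1 / lam) * ∑ k, Real.exp (xt (k + 1) - x (k + 1)) -
      (1 / mu) * ∑ k, Real.exp (xh (k + 1) - x (k + 1)) -
      (1 / lam) * ∑ k, Real.exp (yh k - xh k) +
      (1 / mu) * ∑ k, Real.exp (yh k - xt k) = 0 := by
    rw [Finset.mul_sum, Finset.mul_sum, Finset.mul_sum, Finset.mul_sum,
      ← Finset.sum_sub_distrib, ← Finset.sum_sub_distrib, ← Finset.sum_add_distrib]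
    exact Finset.sum_eq_zero fun k _ => hsup1 k
  have S2 : lam * ∑ k, Real.exp (x (k + 1) - xt k) - mu * ∑ k, Real.exp (x (k + 1) - xh k) -
      lam * ∑ k, Real.exp (xh (k + 1) - yh k) + mu * ∑ k, Real.exp (xt (k + 1) - yh k) = 0 := by
    rw [Finset.mul_sum, Finset.mul_sum, Finset.mul_sum, Finset.mul_sum,
      ← Finset.sum_sub_distrib, ← Finset.sum_sub_distrib, ← Finset.sum_add_distrib]
    exact Finset.sum_eq_zero fun k _ => hsup2 k
  have sh1 : ∑ k : ZMod N, Real.exp (xt (k + 1) - x (k + 1)) =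
      ∑ k : ZMod N, Real.exp (xt k - x k) :=
    Fintype.sum_equiv (Equiv.addRight 1) _ _ fun k => rfl
  have sh2 : ∑ k : ZMod N, Real.exp (xh (k + 1) - x (k + 1)) =
      ∑ k : ZMod N, Real.exp (xh k - x k) :=
    Fintype.sum_equiv (Equiv.addRight 1) _ _ fun k => rfl
  rw [sh1, sh2] at S1
  unfold todaLagr
  simp only [Finset.sum_sub_distrib, Finset.sum_add_distrib]
  linear_combination S1 - S2
end
end

section
/- Let μ ∈ ℝ \ {0} and let x, x̂, p : ℤ → ℝ and ψ : ℤ → ℝ \ {0} be sequences such that for all k: p_k = (1/μ)(e^{x̂_k − x_k} − 1) + μ e^{x_k − x̂_{k−1}} and e^{x̂_k − x_k} = μ ψ_{k+1} / ψ_k. Then for all k: ψ_{k+1} = (1/μ + p_k) ψ_k − e^{x_k − x_{k−1}} ψ_{k−1}. -/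
/-- Substituting `e^{x̂_k − x_k} = μ ψ_{k+1}/ψ_k` into the defining
equation of the Toda Bäcklund transformation `F_μ` yields the spectral difference equation
`ψ_{k+1} = (1/μ + p_k) ψ_k − e^{x_k − x_{k−1}} ψ_{k−1}` of the Toda hierarchy.
Here `xh = x̂`. -/
theorem toda_wave_function_equation (mu : ℝ) (hmu : mu ≠ 0)
    (x xh p : ℤ → ℝ) (ψ : ℤ → ℝ) (hψ : ∀ k, ψ k ≠ 0)
    (hBT : ∀ k : ℤ, p k = (1 / mu) * (Real.exp (xh k - x k) - 1) +
      mu * Real.exp (x k - xh (k - 1)))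
    (hsub : ∀ k : ℤ, Real.exp (xh k - x k) = mu * (ψ (k + 1) / ψ k)) :
    ∀ k : ℤ, ψ (k + 1) = (1 / mu + p k) * ψ k - Real.exp (x k - x (k - 1)) * ψ (k - 1) := by
  intro k
  have h1 := hsub k
  have h2 := hsub (k - 1)
  rw [show k - 1 + 1 = k by ring] at h2
  have hexp : Real.exp (x k - xh (k - 1)) =
      Real.exp (x k - x (k - 1)) * (ψ (k - 1) / (mu * ψ k)) := by
    have : Real.exp (x k - xh (k - 1)) =
        Real.exp (x k - x (k - 1)) * Real.exp (x (k - 1) - xh (k - 1)) := by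
      rw [← Real.exp_add]; ring_nf
    rw [this]
    have hpos := Real.exp_ne_zero (xh (k - 1) - x (k - 1))
    have : Real.exp (x (k - 1) - xh (k - 1)) = (Real.exp (xh (k - 1) - x (k - 1)))⁻¹ := by
      rw [← Real.exp_neg]; ring_nf
    rw [this, h2]
    field_simp [hψ k, hψ (k - 1), hmu]
  have key : ψ (k + 1) * ψ k =
      ((1 / mu + p k) * ψ k - Real.exp (x k - x (k - 1)) * ψ (k - 1)) * ψ k := by
    rw [hBT k, h1, hexp]
    field_simp [hψ k, hψ (k - 1), hmu]
    ring
  exact mul_right_cancel₀ (hψ k) key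
end

section
/- Let λ ∈ ℝ \ {0} and let x, x̃, p, p̃ : ℤ → ℝ be sequences satisfying, for all k, the Bäcklund transformation equations p_k = (1/λ)(e^{x̃_k − x_k} − 1) + λ e^{x_k − x̃_{k−1}} and p̃_k = (1/λ)(e^{x̃_k − x_k} − 1) + λ e^{x_{k+1} − x̃_k}. For μ ∈ ℝ \ {0} define the 2×2 real matrices L_k(μ) = [[1/μ + p_k, e^{x_k}], [−e^{−x_k}, 0]], L̃_k(μ) = [[1/μ + p̃_k, e^{x̃_k}], [−e^{−x̃_k}, 0]], and V_k(μ) = [[1 − λ/μ − λ² e^{x_k − x̃_{k−1}}, −λ e^{x_k}], [λ e^{−x̃_{k−1}}, 1]]. Then the zero-curvature relation L̃_k(μ) V_k(μ) = V_{k+1}(μ) L_k(μ) holds for all k ∈ ℤ and all μ ∈ ℝ \ {0}. -/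
open Matrix

/-- The Bäcklund transformation `F_λ` of the Toda lattice admits the
zero-curvature representation `L̃_k(μ) V_k(μ) = V_{k+1}(μ) L_k(μ)` with spectral parameter
`μ`. Here `xt = x̃`, `pt = p̃`. -/
theorem toda_zero_curvature (lam : ℝ) (hlam : lam ≠ 0)
    (x xt p pt : ℤ → ℝ)
    (h1 : ∀ k : ℤ, p k = (1 / lam) * (Real.exp (xt k - x k) - 1) +
      lam * Real.exp (x k - xt (k - 1)))
    (h2 : ∀ k : ℤ, pt k = (1 / lam) * (Real.exp (xt k - x k) - 1) +
      lam * Real.exp (x (k + 1) - xt k)) :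
    ∀ (k : ℤ) (mu : ℝ), mu ≠ 0 →
      (!![1 / mu + pt k, Real.exp (xt k); -Real.exp (-xt k), 0] :
          Matrix (Fin 2) (Fin 2) ℝ) *
        !![1 - lam / mu - lam ^ 2 * Real.exp (x k - xt (k - 1)), -lam * Real.exp (x k);
           lam * Real.exp (-xt (k - 1)), 1] =
      (!![1 - lam / mu - lam ^ 2 * Real.exp (x (k + 1) - xt k), -lam * Real.exp (x (k + 1));
           lam * Real.exp (-xt k), 1] :
          Matrix (Fin 2) (Fin 2) ℝ) *
        !![1 / mu + p k, Real.exp (x k); -Real.exp (-x k), 0] := by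
  intro k mu hmu
  have e1 := h1 k
  have e2 := h2 k
  have hxs : Real.exp (xt k - x k) = Real.exp (xt k) * Real.exp (-x k) := by
    rw [← Real.exp_add]; ring_nf
  have hxs2 : Real.exp (x k - xt (k-1)) = Real.exp (x k) * Real.exp (-xt (k-1)) := by
    rw [← Real.exp_add]; ring_nf
  have hxs3 : Real.exp (x (k+1) - xt k) = Real.exp (x (k+1)) * Real.exp (-xt k) := by
    rw [← Real.exp_add]; ring_nf
  have hex : Real.exp (x k) * Real.exp (-x k) = 1 := by
    rw [← Real.exp_add]; simp
  have hext : Real.exp (xt k) * Real.exp (-xt k) = 1 := by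
    rw [← Real.exp_add]; simp
  simp only [hxs, hxs2, hxs3] at e1 e2
  simp only [hxs2, hxs3]
  simp only [Real.exp_neg] at e1 e2 ⊢
  ext i j
  fin_cases i <;> fin_cases j <;>
    simp [Matrix.mul_apply, Fin.sum_univ_succ, e1, e2] <;>
    field_simp <;> ring
end
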